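/- Let X₁ ↪ X₀ be a densely and continuously injected couple of complex Banach spaces, θ ∈ [0,π), c ≥ 0, and let A : X₁ → X₀ be such that A + c is R-sectorial of angle θ with sectorial bound K ≥ 1 and R-sectorial bound R ≥ 1. Let B : X₁ → X₀ be a bounded operator with ‖(A − B)(A + c)⁻¹‖_{L(X₀)} < (1/2) min{1/(1+K), 1/(1+R)}. Then S_θ ⊆ ρ(−(B + c)) and B + c is R-sectorial of angle θ with R-sectorial bound 2R. -/

import Mathlib

noncomputable section

open MeasureTheory Set
open scoped ENNReal NNReal

/-- A couple of complex Banach spaces `X₁ ↪ X₀`, continuously and densely injected. -/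
structure BanachCouple (X₁ X₀ : Type*) [NormedAddCommGroup X₁] [NormedSpace ℂ X₁]
    [NormedAddCommGroup X₀] [NormedSpace ℂ X₀] where
  J : X₁ →L[ℂ] X₀
  inj : Function.Injective J
  dense : DenseRange J

variable {X₁ X₀ : Type*} [NormedAddCommGroup X₁] [NormedSpace ℂ X₁]
  [NormedAddCommGroup X₀] [NormedSpace ℂ X₀]

/-- The sector `S_θ = {λ ∈ ℂ : |arg λ| ≤ θ} ∪ {0}`. -/
def SectorSet (θ : ℝ) : Set ℂ := {z | |Complex.arg z| ≤ θ} ∪ {0}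

/-- `R : X₀ → X₁` is the resolvent `(A + lam)⁻¹` of the unbounded operator `A` in `X₀`
(with domain `X₁`, viewed in `X₀` via the embedding `C.J`) at the point `lam`,
i.e. `lam ∈ ρ(-A)` with resolvent `R`. -/
def IsResolventAt (C : BanachCouple X₁ X₀) (A : X₁ →L[ℂ] X₀) (lam : ℂ)
    (R : X₀ →L[ℂ] X₁) : Prop :=
  (∀ x : X₀, A (R x) + lam • C.J (R x) = x) ∧ (∀ y : X₁, R (A y + lam • C.J y) = y)

/-- `lam ∈ ρ(-A)`. -/
def InResolvent (C : BanachCouple X₁ X₀) (A : X₁ →L[ℂ] X₀) (lam : ℂ) : Prop :=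
  ∃ R : X₀ →L[ℂ] X₁, IsResolventAt C A lam R

/-- `A` is (invertible) sectorial of angle `θ` with sectorial bound `K`:
`S_θ ⊆ ρ(-A)` and `(1+|λ|)‖(A+λ)⁻¹‖_{L(X₀)} ≤ K` on `S_θ`. -/
def IsSectorial (C : BanachCouple X₁ X₀) (A : X₁ →L[ℂ] X₀) (θ K : ℝ) : Prop :=
  1 ≤ K ∧ ∀ lam ∈ SectorSet θ, ∃ R : X₀ →L[ℂ] X₁, IsResolventAt C A lam R ∧
    (1 + ‖lam‖) * ‖C.J.comp R‖ ≤ K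

/-- The Rademacher functions. -/
def rademacher (k : ℕ) (t : ℝ) : ℝ := (-1 : ℝ) ^ ⌊(2 : ℝ) ^ (k + 1) * t⌋

/-- The norm of `L²(0,1;X₀)`. -/
def L2norm01 (f : ℝ → X₀) : ℝ := (∫ t in Set.Ioc (0:ℝ) 1, ‖f t‖ ^ 2) ^ ((1:ℝ)/2)

/-- The `R`-boundedness condition (with bound `K`) of the family
`{λ(A+λ)⁻¹ : λ ∈ S_θ \ {0}}`, expressed through the Rademacher functions. -/
def RBound (C : BanachCouple X₁ X₀) (A : X₁ →L[ℂ] X₀) (θ K : ℝ) : Prop :=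
  ∀ (N : ℕ) (lam : Fin N → ℂ) (x : Fin N → X₀) (R : Fin N → (X₀ →L[ℂ] X₁)),
    (∀ k, lam k ∈ SectorSet θ ∧ lam k ≠ 0 ∧ IsResolventAt C A (lam k) (R k)) →
    L2norm01 (fun t => ∑ k : Fin N, rademacher k.val t • (lam k • C.J (R k (x k)))) ≤
      K * L2norm01 (fun t => ∑ k : Fin N, rademacher k.val t • x k)

/-- `A` is `R`-sectorial of angle `θ` with `R`-sectorial bound `K`. -/
def IsRSectorial (C : BanachCouple X₁ X₀) (A : X₁ →L[ℂ] X₀) (θ K : ℝ) : Prop :=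
  1 ≤ K ∧ (∃ K', IsSectorial C A θ K') ∧ RBound C A θ K

/-- The operator `A + c : X₁ → X₀`. -/
def shiftOp (C : BanachCouple X₁ X₀) (A : X₁ →L[ℂ] X₀) (c : ℝ) : X₁ →L[ℂ] X₀ :=
  A + (c : ℂ) • C.J

/-- `X` has the unconditionality of martingale differences (UMD) property. -/
def IsUMD (X : Type*) [NormedAddCommGroup X] [NormedSpace ℂ X] [CompleteSpace X] : Prop :=
  ∃ β : ℝ, 0 < β ∧ ∀ (Ω : Type) (mΩ : MeasurableSpace Ω) (μ : Measure Ω),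
    IsProbabilityMeasure μ →
    ∀ (ℱ : Filtration ℕ mΩ) (f : ℕ → Ω → X), Martingale f ℱ μ →
    ∀ ε : ℕ → ℝ, (∀ n, ε n = 1 ∨ ε n = -1) → ∀ n : ℕ,
      eLpNorm (fun ω => ∑ k ∈ Finset.range n, ε k • (f (k+1) ω - f k ω)) 2 μ ≤
        ENNReal.ofReal β * eLpNorm (fun ω => f n ω - f 0 ω) 2 μ

/-- The `K`-functional of the couple `(X₁, X₀)`. -/
def interpK (C : BanachCouple X₁ X₀) (t : ℝ) (x : X₀) : ℝ :=
  sInf {r : ℝ | ∃ a : X₁, r = ‖a‖ + t * ‖x - C.J a‖}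

/-- The norm of the real interpolation space `(X₁, X₀)_{φ,q}`. -/
def interpNorm (C : BanachCouple X₁ X₀) (φ q : ℝ) (x : X₀) : ℝ≥0∞ :=
  (∫⁻ t in Set.Ioi (0:ℝ), ENNReal.ofReal ((t ^ (-φ) * interpK C t x) ^ q / t)) ^ (1/q)

/-- The real interpolation space `(X₁, X₀)_{φ,q}`, as a subset of `X₀`. -/
def interpSpace (C : BanachCouple X₁ X₀) (φ q : ℝ) : Set X₀ :=
  {x | interpNorm C φ q x < ⊤}

/-- The interpolation norm, as a real number. -/
def interpNormR (C : BanachCouple X₁ X₀) (φ q : ℝ) (x : X₀) : ℝ :=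
  (interpNorm C φ q x).toReal

/-- Membership in `L^q(a,b;X₀)`. -/
def MemLqI (q a b : ℝ) (f : ℝ → X₀) : Prop :=
  MemLp f (ENNReal.ofReal q) (volume.restrict (Set.Ioc a b))

/-- The norm of `L^q(a,b;X₀)`. -/
def LqNorm (q a b : ℝ) (f : ℝ → X₀) : ℝ :=
  (eLpNorm f (ENNReal.ofReal q) (volume.restrict (Set.Ioc a b))).toReal

/-- The domain `D(A^k)` of the `k`-th power of the unbounded operator `A` in `X₀`. -/
def domPow (C : BanachCouple X₁ X₀) (A : X₁ →L[ℂ] X₀) : ℕ → Set X₀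
  | 0 => Set.univ
  | k + 1 => {ξ | ∃ x : X₁, C.J x = ξ ∧ A x ∈ domPow C A k}

open Classical in
/-- The (unique, by injectivity of `C.J`) lift of an element of `X₀` to `X₁`, when it exists. -/
def liftX (C : BanachCouple X₁ X₀) (ξ : X₀) : X₁ :=
  if h : ∃ x : X₁, C.J x = ξ then h.choose else 0

/-- The `k`-th power `A^k` applied to an element of `X₀` (junk value outside `D(A^k)`). -/
def Apow (C : BanachCouple X₁ X₀) (A : X₁ →L[ℂ] X₀) : ℕ → X₀ → X₀
  | 0 => fun ξ => ξ
  | k + 1 => fun ξ => Apow C A k (A (liftX C ξ))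

/-- The graph norm `‖·‖_{D(A^k)} = ∑_{i ≤ k} ‖A^i ·‖_{X₀}`. -/
def graphNorm (C : BanachCouple X₁ X₀) (A : X₁ →L[ℂ] X₀) (k : ℕ) (ξ : X₀) : ℝ :=
  ∑ i ∈ Finset.range (k + 1), ‖Apow C A i ξ‖

/-- `v ∈ C^∞(s; D(A^k))`: all time-derivatives exist, take values in `D(A^k)` and are
continuous together with `A^i`, `i ≤ k`, applied to them. -/
def SmoothIntoDom (C : BanachCouple X₁ X₀) (A : X₁ →L[ℂ] X₀) (s : Set ℝ) (k : ℕ)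
    (v : ℝ → X₀) : Prop :=
  ∃ D : ℕ → ℝ → X₀, D 0 = v ∧
    (∀ j : ℕ, ∀ t ∈ s, HasDerivAt (D j) (D (j+1) t) t) ∧
    (∀ j : ℕ, ∀ t ∈ s, D j t ∈ domPow C A k) ∧
    (∀ j : ℕ, ∀ i ≤ k, ContinuousOn (fun t => Apow C A i (D j t)) s)

/-- A strongly continuous semigroup of bounded operators on `X₀`. -/
structure IsOpSemigroup (Sg : ℝ → X₀ →L[ℂ] X₀) : Prop where
  id : Sg 0 = ContinuousLinearMap.id ℂ X₀
  comp : ∀ s ≥ (0:ℝ), ∀ t ≥ (0:ℝ), Sg (s + t) = (Sg s).comp (Sg t)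
  cont : ∀ x : X₀, ContinuousOn (fun t => Sg t x) (Set.Ici 0)

/-- `-A` is the infinitesimal generator of the strongly continuous semigroup `Sg`. -/
def GeneratedBy (C : BanachCouple X₁ X₀) (A : X₁ →L[ℂ] X₀) (Sg : ℝ → X₀ →L[ℂ] X₀) : Prop :=
  IsOpSemigroup Sg ∧ ∀ x : X₁, ∀ t ∈ Set.Ici (0:ℝ),
    HasDerivWithinAt (fun s => Sg s (C.J x)) (-(Sg t (A x))) (Set.Ici 0) t

/-- `-A` generates the (strongly continuous) analytic semigroup `Sg` on `X₀`:
in addition to generation, `Sg t` smooths into `D(A)` for `t > 0` with the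
characteristic bound `‖A Sg(t)‖ ≤ M/t` and `t ↦ Sg t ξ` is differentiable for `t > 0`. -/
def IsAnalyticSemigroupGen (C : BanachCouple X₁ X₀) (A : X₁ →L[ℂ] X₀)
    (Sg : ℝ → X₀ →L[ℂ] X₀) : Prop :=
  GeneratedBy C A Sg ∧
  (∀ t > (0:ℝ), ∀ ξ : X₀, Sg t ξ ∈ domPow C A 1) ∧
  (∃ M > (0:ℝ), ∀ t ∈ Set.Ioc (0:ℝ) 1, ∀ ξ : X₀, ‖Apow C A 1 (Sg t ξ)‖ ≤ M / t * ‖ξ‖) ∧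
  (∀ ξ : X₀, ∀ t > (0:ℝ), HasDerivAt (fun s => Sg s ξ) (-(Apow C A 1 (Sg t ξ))) t)

section AuxLemmas

variable {X₁ X₀ : Type*} [NormedAddCommGroup X₁] [NormedSpace ℂ X₁]
  [NormedAddCommGroup X₀] [NormedSpace ℂ X₀]

local notation "μ01" => volume.restrict (Set.Ioc (0:ℝ) 1)

lemma isFiniteMeasure_mu01 : IsFiniteMeasure (volume.restrict (Set.Ioc (0:ℝ) 1)) := by
  constructor
  rw [Measure.restrict_apply_univ]
  simp [Real.volume_Ioc]

attribute [local instance] isFiniteMeasure_mu01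

lemma mu01_univ : (volume.restrict (Set.Ioc (0:ℝ) 1)) Set.univ = 1 := by
  rw [Measure.restrict_apply_univ]
  simp [Real.volume_Ioc]

lemma rademacher_measurable (k : ℕ) : Measurable (rademacher k) := by
  have h1 : Measurable fun t : ℝ => ⌊(2:ℝ) ^ (k+1) * t⌋ :=
    Int.measurable_floor.comp (measurable_id.const_mul _)
  exact (measurable_from_top (f := fun n : ℤ => (-1:ℝ) ^ n)).comp h1

lemma abs_rademacher (k : ℕ) (t : ℝ) : |rademacher k t| = 1 := by
  unfold rademacher
  rcases Int.even_or_odd ⌊(2:ℝ) ^ (k + 1) * t⌋ with h | h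
  · rw [h.neg_one_zpow]; norm_num
  · rw [h.neg_one_zpow]; norm_num

/-- The Rademacher sum with coefficients `v`. -/
def radSum {N : ℕ} (v : Fin N → X₀) : ℝ → X₀ :=
  fun t => ∑ k : Fin N, rademacher k.val t • v k

set_option maxHeartbeats 1000000 in
lemma radSum_stronglyMeasurable {N : ℕ} (v : Fin N → X₀) :
    StronglyMeasurable (radSum v) := by
  have hcont : Continuous fun r : Fin N → ℝ => ∑ k : Fin N, r k • v k :=
    continuous_finset_sum _ fun k _ => (continuous_apply k).smul continuous_const
  have hmeas : StronglyMeasurable fun t : ℝ => (fun k : Fin N => rademacher k.val t) :=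
    (measurable_pi_lambda _ fun (k : Fin N) => rademacher_measurable k.val).stronglyMeasurable
  exact hcont.comp_stronglyMeasurable hmeas

lemma radSum_norm_le {N : ℕ} (v : Fin N → X₀) (t : ℝ) :
    ‖radSum v t‖ ≤ ∑ k : Fin N, ‖v k‖ := by
  refine (norm_sum_le _ _).trans (Finset.sum_le_sum fun k _ => ?_)
  rw [norm_smul, Real.norm_eq_abs, abs_rademacher, one_mul]

lemma radSum_memLp {N : ℕ} (v : Fin N → X₀) :
    MemLp (radSum v) 2 (volume.restrict (Set.Ioc (0:ℝ) 1)) :=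
  MemLp.of_bound (radSum_stronglyMeasurable v).aestronglyMeasurable _
    (ae_of_all _ (radSum_norm_le v))

lemma L2norm01_nonneg (f : ℝ → X₀) : 0 ≤ L2norm01 f :=
  Real.rpow_nonneg (integral_nonneg fun t => by positivity) _

lemma L2norm01_eq_eLpNorm {f : ℝ → X₀}
    (hf : MemLp f 2 (volume.restrict (Set.Ioc (0:ℝ) 1))) :
    L2norm01 f = (eLpNorm f 2 (volume.restrict (Set.Ioc (0:ℝ) 1))).toReal := by
  rw [hf.eLpNorm_eq_integral_rpow_norm two_ne_zero ENNReal.ofNat_ne_top,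
    ENNReal.toReal_ofReal (by positivity)]
  unfold L2norm01
  norm_num

lemma eLpNorm_radSum_ne_top {N : ℕ} (v : Fin N → X₀) :
    eLpNorm (radSum v) 2 (volume.restrict (Set.Ioc (0:ℝ) 1)) ≠ ⊤ :=
  (radSum_memLp v).2.ne

lemma L2_radSum_toReal {N : ℕ} (v : Fin N → X₀) :
    L2norm01 (radSum v) = (eLpNorm (radSum v) 2 (volume.restrict (Set.Ioc (0:ℝ) 1))).toReal :=
  L2norm01_eq_eLpNorm (radSum_memLp v)

lemma radSum_add {N : ℕ} (v w : Fin N → X₀) :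
    radSum (fun k => v k + w k) = fun t => radSum v t + radSum w t := by
  funext t
  simp [radSum, smul_add, Finset.sum_add_distrib]

lemma L2_radSum_add_le {N : ℕ} (v w : Fin N → X₀) :
    L2norm01 (radSum (fun k => v k + w k)) ≤ L2norm01 (radSum v) + L2norm01 (radSum w) := by
  rw [L2_radSum_toReal, L2_radSum_toReal, L2_radSum_toReal]
  have h : eLpNorm (radSum (fun k => v k + w k)) 2 (volume.restrict (Set.Ioc (0:ℝ) 1)) ≤
      eLpNorm (radSum v) 2 (volume.restrict (Set.Ioc (0:ℝ) 1)) +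
      eLpNorm (radSum w) 2 (volume.restrict (Set.Ioc (0:ℝ) 1)) := by
    rw [radSum_add]
    exact eLpNorm_add_le (radSum_memLp v).aestronglyMeasurable
      (radSum_memLp w).aestronglyMeasurable one_le_two
  rw [← ENNReal.toReal_add (eLpNorm_radSum_ne_top v) (eLpNorm_radSum_ne_top w)]
  exact ENNReal.toReal_mono
    (by exact ENNReal.add_ne_top.2 ⟨eLpNorm_radSum_ne_top v, eLpNorm_radSum_ne_top w⟩) h

lemma L2_radSum_neg {N : ℕ} (v : Fin N → X₀) :
    L2norm01 (radSum (fun k => -(v k))) = L2norm01 (radSum v) := by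
  unfold L2norm01 radSum
  congr 1
  refine integral_congr_ae (ae_of_all _ fun t => ?_)
  have : ∑ k : Fin N, rademacher k.val t • (-(v k)) = -∑ k : Fin N, rademacher k.val t • v k := by
    simp [smul_neg]
  simp only [this, norm_neg]

lemma L2_radSum_sub_le {N : ℕ} (v w : Fin N → X₀) :
    L2norm01 (radSum (fun k => v k - w k)) ≤ L2norm01 (radSum v) + L2norm01 (radSum w) := by
  have h := L2_radSum_add_le v (fun k => -(w k))
  simp only [sub_eq_add_neg]
  exact le_trans (le_of_eq rfl) (h.trans (by rw [L2_radSum_neg]))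

lemma L2_radSum_clm_le {N : ℕ} (S : X₀ →L[ℂ] X₀) (v : Fin N → X₀) :
    L2norm01 (radSum (fun k => S (v k))) ≤ ‖S‖ * L2norm01 (radSum v) := by
  rw [L2_radSum_toReal, L2_radSum_toReal]
  have hpt : ∀ t, ‖radSum (fun k => S (v k)) t‖₊ ≤ ‖S‖₊ * ‖radSum v t‖₊ := by
    intro t
    have : radSum (fun k => S (v k)) t = S (radSum v t) := by
      simp [radSum, map_sum, ContinuousLinearMap.map_smul_of_tower]
    rw [this]
    exact S.le_opNNNorm (radSum v t)
  have h := eLpNorm_le_nnreal_smul_eLpNorm_of_ae_le_mul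
    (μ := volume.restrict (Set.Ioc (0:ℝ) 1)) (f := radSum (fun k => S (v k)))
    (g := radSum v) (c := ‖S‖₊) (ae_of_all _ hpt) 2
  calc (eLpNorm (radSum (fun k => S (v k))) 2 (volume.restrict (Set.Ioc (0:ℝ) 1))).toReal
      ≤ ((‖S‖₊ : ℝ≥0∞) * eLpNorm (radSum v) 2 (volume.restrict (Set.Ioc (0:ℝ) 1))).toReal := by
        refine ENNReal.toReal_mono ?_ (by simpa [ENNReal.smul_def] using h)
        exact ENNReal.mul_ne_top ENNReal.coe_ne_top (eLpNorm_radSum_ne_top v)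
    _ = ‖S‖ * (eLpNorm (radSum v) 2 (volume.restrict (Set.Ioc (0:ℝ) 1))).toReal := by
        rw [ENNReal.toReal_mul, ENNReal.coe_toReal, coe_nnnorm]

lemma L2_radSum_le_sum_norm {N : ℕ} (v : Fin N → X₀) :
    L2norm01 (radSum v) ≤ ∑ k : Fin N, ‖v k‖ := by
  rw [L2_radSum_toReal]
  have h := eLpNorm_le_of_ae_bound (p := 2) (μ := volume.restrict (Set.Ioc (0:ℝ) 1))
    (ae_of_all _ (radSum_norm_le v))
  rw [mu01_univ, ENNReal.one_rpow, one_mul] at h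
  calc (eLpNorm (radSum v) 2 (volume.restrict (Set.Ioc (0:ℝ) 1))).toReal
      ≤ (ENNReal.ofReal (∑ k : Fin N, ‖v k‖)).toReal :=
        ENNReal.toReal_mono ENNReal.ofReal_ne_top h
    _ = ∑ k : Fin N, ‖v k‖ := ENNReal.toReal_ofReal (by positivity)

lemma L2_radSum_finsum_le {N : ℕ} (g : ℕ → Fin N → X₀) (M : ℕ) :
    L2norm01 (radSum (fun k => ∑ m ∈ Finset.range M, g m k)) ≤
      ∑ m ∈ Finset.range M, L2norm01 (radSum (g m)) := by
  induction M with
  | zero =>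
      simp only [Finset.range_zero, Finset.sum_empty]
      have : radSum (fun _ : Fin N => (0:X₀)) = fun _ : ℝ => (0:X₀) := by
        funext t; simp [radSum]
      rw [this]
      unfold L2norm01
      simp
  | succ M ih =>
      simp only [Finset.sum_range_succ]
      exact le_trans (L2_radSum_add_le _ _) (by linarith [ih])

end AuxLemmas

set_option maxHeartbeats 3000000 in
/-- **Neumann-series perturbation of `R`-sectorial operators.**
Let `A + c` be `R`-sectorial of angle `θ` with sectorial bound `K ≥ 1` and `R`-sectorial
bound `R ≥ 1`, and let `B : X₁ → X₀` be bounded with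
`‖(A − B)(A + c)⁻¹‖_{L(X₀)} < (1/2) min{1/(1+K), 1/(1+R)}`.  Then `S_θ ⊆ ρ(−(B + c))`
and `B + c` is `R`-sectorial of angle `θ` with `R`-sectorial bound `2R`. -/
theorem neumann_series_R_sectorial_perturbation
    {X₁ X₀ : Type*} [NormedAddCommGroup X₁] [NormedSpace ℂ X₁] [CompleteSpace X₁]
    [NormedAddCommGroup X₀] [NormedSpace ℂ X₀] [CompleteSpace X₀]
    (C : BanachCouple X₁ X₀) (θ c K R : ℝ)
    (hθ : θ ∈ Set.Ico 0 Real.pi) (hc : 0 ≤ c) (hK : 1 ≤ K) (hR : 1 ≤ R)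
    (A B : X₁ →L[ℂ] X₀)
    (hA : IsSectorial C (shiftOp C A c) θ K)
    (hAR : IsRSectorial C (shiftOp C A c) θ R)
    (R0 : X₀ →L[ℂ] X₁) (hR0 : IsResolventAt C (shiftOp C A c) 0 R0)
    (hsmall : ‖(A - B).comp R0‖ < (1/2) * min (1 / (1 + K)) (1 / (1 + R))) :
    (∀ lam ∈ SectorSet θ, InResolvent C (shiftOp C B c) lam) ∧
    IsRSectorial C (shiftOp C B c) θ (2 * R) := by
  classical
  set A' := shiftOp C A c with hA'def
  set B' := shiftOp C B c with hB'def
  set S : X₀ →L[ℂ] X₀ := (A - B).comp R0 with hSdef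
  have hε0 : 0 ≤ ‖S‖ := norm_nonneg _
  have hK0 : (0:ℝ) < 1 + K := by linarith
  have hR0' : (0:ℝ) < 1 + R := by linarith
  have hεK : ‖S‖ * (1 + K) < 1/2 := by
    have h1 : ‖S‖ < (1/2) * (1/(1+K)) := by
      refine lt_of_lt_of_le hsmall ?_
      have := min_le_left (1 / (1 + K)) (1 / (1 + R))
      linarith
    have h2 := mul_lt_mul_of_pos_right h1 hK0
    have h3 : (1/2) * (1/(1+K)) * (1+K) = 1/2 := by field_simp
    linarith
  have hεR : ‖S‖ * (1 + R) < 1/2 := by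
    have h1 : ‖S‖ < (1/2) * (1/(1+R)) := by
      refine lt_of_lt_of_le hsmall ?_
      have := min_le_right (1 / (1 + K)) (1 / (1 + R))
      linarith
    have h2 := mul_lt_mul_of_pos_right h1 hR0'
    have h3 : (1/2) * (1/(1+R)) * (1+R) = 1/2 := by field_simp
    linarith
  have hAB : ∀ y : X₁, B' y = A' y - (A - B) y := by
    intro y
    simp only [hA'def, hB'def, shiftOp, ContinuousLinearMap.add_apply,
      ContinuousLinearMap.sub_apply, ContinuousLinearMap.smul_apply]
    abel
  have hTform : ∀ (lam : ℂ) (Rl : X₀ →L[ℂ] X₁), IsResolventAt C A' lam Rl →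
      ∀ z : X₀, (A - B) (Rl z) = S (z - lam • C.J (Rl z)) := by
    intro lam Rl hres z
    have h1 : R0 (A' (Rl z)) = Rl z := by
      have h := hR0.2 (Rl z)
      simpa using h
    have h2 : A' (Rl z) = z - lam • C.J (Rl z) := eq_sub_of_add_eq (hres.1 z)
    calc (A - B) (Rl z) = (A - B) (R0 (A' (Rl z))) := by rw [h1]
      _ = S (A' (Rl z)) := rfl
      _ = S (z - lam • C.J (Rl z)) := by rw [h2]
  -- per-point construction
  have hpoint : ∀ lam ∈ SectorSet θ, ∃ (Rl : X₀ →L[ℂ] X₁) (U : X₀ →L[ℂ] X₀),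
      IsResolventAt C A' lam Rl ∧ (1 + ‖lam‖) * ‖C.J.comp Rl‖ ≤ K ∧
      HasSum (fun m => ((A - B).comp Rl) ^ m) U ∧ ‖U‖ ≤ 2 ∧
      IsResolventAt C B' lam (Rl.comp U) := by
    intro lam hlam
    obtain ⟨Rl, hres, hKb⟩ := hA.2 lam hlam
    set T : X₀ →L[ℂ] X₀ := (A - B).comp Rl with hTdef
    have habs0 : 0 ≤ ‖lam‖ := norm_nonneg lam
    have hJR : ‖lam‖ * ‖C.J.comp Rl‖ ≤ K := by
      nlinarith [norm_nonneg (C.J.comp Rl)]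
    have hTnorm : ‖T‖ ≤ ‖S‖ * (1 + K) := by
      refine ContinuousLinearMap.opNorm_le_bound _ (by positivity) fun z => ?_
      have hTz : T z = S (z - lam • C.J (Rl z)) := hTform lam Rl hres z
      rw [hTz]
      have hb1 : ‖lam • C.J (Rl z)‖ ≤ ‖lam‖ * (‖C.J.comp Rl‖ * ‖z‖) := by
        rw [norm_smul]
        exact mul_le_mul_of_nonneg_left ((C.J.comp Rl).le_opNorm z) habs0
      have hb2 : ‖z - lam • C.J (Rl z)‖ ≤ (1 + K) * ‖z‖ := by
        have := norm_sub_le z (lam • C.J (Rl z))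
        nlinarith [norm_nonneg z]
      calc ‖S (z - lam • C.J (Rl z))‖ ≤ ‖S‖ * ‖z - lam • C.J (Rl z)‖ := S.le_opNorm _
        _ ≤ ‖S‖ * ((1 + K) * ‖z‖) := mul_le_mul_of_nonneg_left hb2 hε0
        _ = ‖S‖ * (1 + K) * ‖z‖ := by ring
    have hT1 : ‖T‖ < 1 := hTnorm.trans_lt (by linarith)
    have hsummable := summable_geometric_of_norm_lt_one hT1
    have hq0 : (0:ℝ) ≤ ‖S‖ * (1+K) := by positivity
    have hpow : ∀ m : ℕ, ‖T ^ m‖ ≤ (‖S‖ * (1+K)) ^ m := by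
      intro m
      match m with
      | 0 =>
        simp only [pow_zero]
        calc ‖(1 : X₀ →L[ℂ] X₀)‖ = ‖ContinuousLinearMap.id ℂ X₀‖ := rfl
          _ ≤ 1 := ContinuousLinearMap.norm_id_le
      | Nat.succ m =>
        exact (norm_pow_le' T m.succ_pos).trans
          (pow_le_pow_left₀ (norm_nonneg T) hTnorm _)
    have hgs : Summable fun m : ℕ => (‖S‖ * (1+K)) ^ m :=
      summable_geometric_of_lt_one hq0 (by linarith)
    have hnorms : Summable fun m : ℕ => ‖T ^ m‖ :=
      hgs.of_nonneg_of_le (fun m => norm_nonneg _) hpow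
    have hUb : ‖∑' m : ℕ, T ^ m‖ ≤ 2 := by
      calc ‖∑' m : ℕ, T ^ m‖ ≤ ∑' m : ℕ, ‖T ^ m‖ := norm_tsum_le_tsum_norm hnorms
        _ ≤ ∑' m : ℕ, (‖S‖ * (1+K)) ^ m := Summable.tsum_le_tsum hpow hnorms hgs
        _ = (1 - ‖S‖ * (1+K))⁻¹ := tsum_geometric_of_lt_one hq0 (by linarith)
        _ ≤ 2 := by
            rw [show (2:ℝ) = ((1:ℝ)/2)⁻¹ by norm_num]
            apply inv_anti₀ <;> linarith
    have hval : (1 - T) * (∑' m : ℕ, T ^ m) = 1 := mul_neg_geom_series T hT1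
    have hinv : (∑' m : ℕ, T ^ m) * (1 - T) = 1 := geom_series_mul_neg T hT1
    refine ⟨Rl, ∑' m : ℕ, T ^ m, hres, hKb, hsummable.hasSum, hUb, ?_, ?_⟩
    · -- forward
      intro z
      show B' (Rl ((∑' m : ℕ, T ^ m) z)) + lam • C.J (Rl ((∑' m : ℕ, T ^ m) z)) = z
      set u := (∑' m : ℕ, T ^ m) z with hu
      have h1 : A' (Rl u) + lam • C.J (Rl u) = u := hres.1 u
      have h2 : (A - B) (Rl u) = T u := rfl
      have h3 : ((1 - T) * (∑' m : ℕ, T ^ m)) z = z := by rw [hval]; rfl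
      calc B' (Rl u) + lam • C.J (Rl u)
          = (A' (Rl u) + lam • C.J (Rl u)) - (A - B) (Rl u) := by rw [hAB]; abel
        _ = u - T u := by rw [h1, h2]
        _ = ((1 - T) * (∑' m : ℕ, T ^ m)) z := by
            rw [ContinuousLinearMap.mul_apply, ContinuousLinearMap.sub_apply,
              ContinuousLinearMap.one_apply, ← hu]
        _ = z := h3
    · -- backward
      intro y
      show Rl ((∑' m : ℕ, T ^ m) (B' y + lam • C.J y)) = y
      set z := A' y + lam • C.J y with hz
      have hRz : Rl z = y := hres.2 y
      have harg : B' y + lam • C.J y = z - T z := by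
        have hTy : (A - B) y = T z := by
          calc (A - B) y = (A - B) (Rl z) := by rw [hRz]
            _ = T z := rfl
        rw [hAB, ← hTy, hz]
        abel
      rw [harg]
      have h4 : (∑' m : ℕ, T ^ m) (z - T z) = z := by
        have h5 : ((∑' m : ℕ, T ^ m) * (1 - T)) z = z := by rw [hinv]; rfl
        rw [ContinuousLinearMap.mul_apply, ContinuousLinearMap.sub_apply,
          ContinuousLinearMap.one_apply] at h5
        exact h5
      rw [h4, hRz]
  refine ⟨fun lam hlam => ?_, ?_, ⟨2*K, by linarith, ?_⟩, ?_⟩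
  · obtain ⟨Rl, U, _, _, _, _, hresB⟩ := hpoint lam hlam
    exact ⟨Rl.comp U, hresB⟩
  · linarith
  · -- sectoriality of B' with constant 2K
    intro lam hlam
    obtain ⟨Rl, U, hres, hKb, hHS, hUb, hresB⟩ := hpoint lam hlam
    refine ⟨Rl.comp U, hresB, ?_⟩
    have habs0 : 0 ≤ ‖lam‖ := norm_nonneg lam
    have h1 : ‖C.J.comp (Rl.comp U)‖ ≤ ‖C.J.comp Rl‖ * ‖U‖ := by
      rw [← ContinuousLinearMap.comp_assoc]
      exact ContinuousLinearMap.opNorm_comp_le _ _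
    calc (1 + ‖lam‖) * ‖C.J.comp (Rl.comp U)‖
        ≤ (1 + ‖lam‖) * (‖C.J.comp Rl‖ * ‖U‖) :=
          mul_le_mul_of_nonneg_left h1 (by positivity)
      _ = ((1 + ‖lam‖) * ‖C.J.comp Rl‖) * ‖U‖ := by ring
      _ ≤ K * 2 := mul_le_mul hKb hUb (norm_nonneg _) (by linarith)
      _ = 2 * K := by ring
  · -- R-boundedness of B' with constant 2R
    intro n lam x Q hQ
    choose Rl U hres hKb hHS hUb hresB using fun k => hpoint (lam k) (hQ k).1
    have hQeq : ∀ k, Q k = (Rl k).comp (U k) := by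
      intro k
      ext z
      have h1 := (hresB k).1 z
      calc Q k z
          = Q k (B' ((Rl k).comp (U k) z) + lam k • C.J ((Rl k).comp (U k) z)) := by rw [h1]
        _ = (Rl k).comp (U k) z := (hQ k).2.2.2 _
    set T : Fin n → (X₀ →L[ℂ] X₀) := fun k => (A - B).comp (Rl k) with hTdef
    set h : ℕ → Fin n → X₀ := fun m k => (T k ^ m) (x k) with hhdef
    set g : ℕ → Fin n → X₀ := fun m k => lam k • C.J (Rl k (h m k)) with hgdef
    set L0 : ℝ := L2norm01 (radSum x) with hL0def
    have hL0 : 0 ≤ L0 := L2norm01_nonneg _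
    have halpha : ∀ m, L2norm01 (radSum (g m)) ≤ R * L2norm01 (radSum (h m)) := by
      intro m
      have := hAR.2.2 n lam (h m) Rl (fun k => ⟨(hQ k).1, (hQ k).2.1, hres k⟩)
      exact this
    have hstep : ∀ m, h (m+1) = fun k => S (h m k - g m k) := by
      intro m; funext k
      have h1 : h (m+1) k = T k (h m k) := by
        show (T k ^ (m+1)) (x k) = T k ((T k ^ m) (x k))
        rw [pow_succ']
        rfl
      rw [h1]
      exact hTform (lam k) (Rl k) (hres k) (h m k)
    set q : ℝ := ‖S‖ * (1 + R) with hqdef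
    have hq0 : 0 ≤ q := by positivity
    have hq1 : q < 1/2 := hεR
    have hcontr : ∀ m, L2norm01 (radSum (h (m+1))) ≤ q * L2norm01 (radSum (h m)) := by
      intro m
      rw [hstep m]
      have hnn := L2norm01_nonneg (radSum (h m))
      calc L2norm01 (radSum fun k => S (h m k - g m k))
          ≤ ‖S‖ * L2norm01 (radSum fun k => h m k - g m k) := L2_radSum_clm_le S _
        _ ≤ ‖S‖ * (L2norm01 (radSum (h m)) + L2norm01 (radSum (g m))) :=
            mul_le_mul_of_nonneg_left (L2_radSum_sub_le _ _) hε0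
        _ ≤ ‖S‖ * (L2norm01 (radSum (h m)) + R * L2norm01 (radSum (h m))) := by
            have := halpha m
            nlinarith
        _ = q * L2norm01 (radSum (h m)) := by rw [hqdef]; ring
    have hh0 : h 0 = x := by
      funext k
      show (T k ^ 0) (x k) = x k
      rw [pow_zero]
      rfl
    have hiter : ∀ m, L2norm01 (radSum (h m)) ≤ q ^ m * L0 := by
      intro m
      induction m with
      | zero => simp only [pow_zero, one_mul, hh0, hL0def, le_refl]
      | succ m ih =>
          calc L2norm01 (radSum (h (m+1))) ≤ q * L2norm01 (radSum (h m)) := hcontr m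
            _ ≤ q * (q ^ m * L0) := mul_le_mul_of_nonneg_left ih hq0
            _ = q ^ (m+1) * L0 := by ring
    have hgm : ∀ m, L2norm01 (radSum (g m)) ≤ R * (q ^ m * L0) := by
      intro m
      exact (halpha m).trans (mul_le_mul_of_nonneg_left (hiter m) (by linarith))
    set f : Fin n → X₀ := fun k => lam k • C.J ((Rl k) ((U k) (x k))) with hfdef
    have hgoalL : (fun t => ∑ k : Fin n, rademacher k.val t • (lam k • C.J (Q k (x k))))
        = radSum f := by
      funext t
      refine Finset.sum_congr rfl fun k _ => ?_
      rw [hQeq k]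
      rfl
    have hJRK : ∀ k, ‖lam k‖ * ‖C.J.comp (Rl k)‖ ≤ K := by
      intro k
      have habs0 : 0 ≤ ‖lam k‖ := norm_nonneg _
      nlinarith [norm_nonneg (C.J.comp (Rl k)), hKb k]
    -- geometric sum bound
    have hgeom : ∀ M : ℕ, ∑ m ∈ Finset.range M, q ^ m ≤ 2 := by
      intro M
      have hsum : Summable fun m : ℕ => q ^ m := summable_geometric_of_lt_one hq0 (by linarith)
      calc ∑ m ∈ Finset.range M, q ^ m ≤ ∑' m : ℕ, q ^ m :=
            Summable.sum_le_tsum _ (fun m _ => by positivity) hsum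
        _ = (1 - q)⁻¹ := tsum_geometric_of_lt_one hq0 (by linarith)
        _ ≤ 2 := by
            rw [show (2:ℝ) = ((1:ℝ)/2)⁻¹ by norm_num]
            apply inv_anti₀ <;> linarith
    have hpartial : ∀ M : ℕ, L2norm01 (radSum f) ≤ 2 * R * L0 +
        ∑ k : Fin n, K * ‖(U k) (x k) - ∑ m ∈ Finset.range M, (T k ^ m) (x k)‖ := by
      intro M
      have hsplit : f = fun k => (∑ m ∈ Finset.range M, g m k)
          + (f k - ∑ m ∈ Finset.range M, g m k) := by
        funext k
        abel
      have hdiff : ∀ k, f k - ∑ m ∈ Finset.range M, g m k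
          = lam k • C.J ((Rl k) ((U k) (x k) - ∑ m ∈ Finset.range M, (T k ^ m) (x k))) := by
        intro k
        have hsum : ∑ m ∈ Finset.range M, g m k
            = lam k • C.J ((Rl k) (∑ m ∈ Finset.range M, (T k ^ m) (x k))) := by
          rw [map_sum, map_sum, Finset.smul_sum]
        rw [hsum, ← smul_sub, ← map_sub, ← map_sub]
      have hdiffnorm : ∀ k, ‖f k - ∑ m ∈ Finset.range M, g m k‖
          ≤ K * ‖(U k) (x k) - ∑ m ∈ Finset.range M, (T k ^ m) (x k)‖ := by
        intro k
        rw [hdiff k, norm_smul]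
        set d := (U k) (x k) - ∑ m ∈ Finset.range M, (T k ^ m) (x k) with hd
        have h1 : ‖C.J ((Rl k) d)‖ ≤ ‖C.J.comp (Rl k)‖ * ‖d‖ := (C.J.comp (Rl k)).le_opNorm d
        have habs0 : 0 ≤ ‖lam k‖ := norm_nonneg _
        calc ‖lam k‖ * ‖C.J ((Rl k) d)‖
            ≤ ‖lam k‖ * (‖C.J.comp (Rl k)‖ * ‖d‖) :=
              mul_le_mul_of_nonneg_left h1 habs0
          _ = (‖lam k‖ * ‖C.J.comp (Rl k)‖) * ‖d‖ := by ring
          _ ≤ K * ‖d‖ := mul_le_mul_of_nonneg_right (hJRK k) (norm_nonneg d)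
      calc L2norm01 (radSum f)
          ≤ L2norm01 (radSum fun k => ∑ m ∈ Finset.range M, g m k)
            + L2norm01 (radSum fun k => f k - ∑ m ∈ Finset.range M, g m k) := by
            conv_lhs => rw [hsplit]
            exact L2_radSum_add_le _ _
        _ ≤ (∑ m ∈ Finset.range M, L2norm01 (radSum (g m)))
            + ∑ k : Fin n, ‖f k - ∑ m ∈ Finset.range M, g m k‖ :=
            add_le_add (L2_radSum_finsum_le _ _) (L2_radSum_le_sum_norm _)
        _ ≤ 2 * R * L0
            + ∑ k : Fin n, K * ‖(U k) (x k) - ∑ m ∈ Finset.range M, (T k ^ m) (x k)‖ := by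
            refine add_le_add ?_ (Finset.sum_le_sum fun k _ => hdiffnorm k)
            calc ∑ m ∈ Finset.range M, L2norm01 (radSum (g m))
                ≤ ∑ m ∈ Finset.range M, R * (q ^ m * L0) :=
                  Finset.sum_le_sum fun m _ => hgm m
              _ = R * L0 * ∑ m ∈ Finset.range M, q ^ m := by
                  rw [Finset.mul_sum]
                  congr 1
                  funext m
                  ring
              _ ≤ R * L0 * 2 := by
                  have : 0 ≤ R * L0 := by nlinarith
                  exact mul_le_mul_of_nonneg_left (hgeom M) this
              _ = 2 * R * L0 := by ring
    have htail : Filter.Tendsto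
        (fun M => ∑ k : Fin n, K * ‖(U k) (x k) - ∑ m ∈ Finset.range M, (T k ^ m) (x k)‖)
        Filter.atTop (nhds 0) := by
      have hterm : ∀ k : Fin n, Filter.Tendsto
          (fun M => K * ‖(U k) (x k) - ∑ m ∈ Finset.range M, (T k ^ m) (x k)‖)
          Filter.atTop (nhds 0) := by
        intro k
        have hs : HasSum (fun m => (T k ^ m) (x k)) ((U k) (x k)) :=
          (ContinuousLinearMap.apply ℂ X₀ (x k)).hasSum (hHS k)
        have ht := hs.tendsto_sum_nat
        have h2 := (tendsto_const_nhds (x := (U k) (x k)) (f := Filter.atTop (α := ℕ))).sub ht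
        have h3 := h2.norm
        simp only [sub_self, norm_zero] at h3
        simpa using h3.const_mul K
      have := tendsto_finset_sum (Finset.univ : Finset (Fin n)) (fun k _ => hterm k)
      simpa using this
    have hfinal : L2norm01 (radSum f) ≤ 2 * R * L0 := by
      have hlim : Filter.Tendsto
          (fun M => 2 * R * L0 + ∑ k : Fin n, K *
            ‖(U k) (x k) - ∑ m ∈ Finset.range M, (T k ^ m) (x k)‖)
          Filter.atTop (nhds (2 * R * L0 + 0)) := (tendsto_const_nhds).add htail
      rw [add_zero] at hlim
      exact ge_of_tendsto' hlim hpartial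
    rw [hgoalL]
    exact hfinal
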